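/- Let X be a complete meet-semilattice whose Lawson topology Λ_X is Hausdorff. Then the following are equivalent: (1) X is meet continuous; (2) X endowed with the Lawson topology is a compact topological semilattice; (3) X endowed with the Scott topology is a compact topological semilattice. -/

import Mathlib

open Set TopologicalSpace Cardinal Topology

variable (X : Type*)

/-- The weak• topology `𝒵_X` of a topologized semilattice: generated by the subbase of
complements of closed subsemilattices. -/
def zarTop [SemilatticeInf X] [TopologicalSpace X] : TopologicalSpace X :=
  TopologicalSpace.generateFrom
    {U : Set X | ∃ S : Set X, IsClosed S ∧ (∀ a ∈ S, ∀ b ∈ S, a ⊓ b ∈ S) ∧ U = Sᶜ}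

/-- The weak° topology `η_X` of a topologized semilattice: generated by the base of
open subsemilattices. -/
def etaTop [SemilatticeInf X] [TopologicalSpace X] : TopologicalSpace X :=
  TopologicalSpace.generateFrom
    {U : Set X | IsOpen U ∧ ∀ a ∈ U, ∀ b ∈ U, a ⊓ b ∈ U}

/-- The `𝕀`-weak topology `𝒲_X`: generated by the subbase of preimages of open subsets of
`[0,1]` under continuous homomorphisms `h : X → ([0,1], min)`. -/
def iweakTop [SemilatticeInf X] [TopologicalSpace X] : TopologicalSpace X :=
  TopologicalSpace.generateFrom
    {V : Set X | ∃ h : X → unitInterval, Continuous h ∧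
      (∀ x y : X, h (x ⊓ y) = min (h x) (h y)) ∧
      ∃ U : Set unitInterval, IsOpen U ∧ V = h ⁻¹' U}

/-- `U` is Scott-open: `U = ↑U` and every nonempty up-directed set whose supremum lies in
`U` meets `U`. -/
def ScottOpen [Preorder X] (U : Set X) : Prop :=
  IsUpperSet U ∧ ∀ D : Set X, D.Nonempty → DirectedOn (· ≤ ·) D →
    ∀ a : X, IsLUB D a → a ∈ U → (D ∩ U).Nonempty

/-- The Lawson topology `Λ_X`: generated by the subbase consisting of Scott-open sets and
complements of upper sets `↑x`. -/
def lawsonTop [Preorder X] : TopologicalSpace X :=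
  TopologicalSpace.generateFrom
    ({U : Set X | ScottOpen X U} ∪ {V : Set X | ∃ x : X, V = (Set.Ici x)ᶜ})

/-- The interval topology: generated by the subbase of complements of the sets `↑x`, `↓x`. -/
def intervalTop [Preorder X] : TopologicalSpace X :=
  TopologicalSpace.generateFrom
    ({V : Set X | ∃ x : X, V = (Set.Ici x)ᶜ} ∪ {V : Set X | ∃ x : X, V = (Set.Iic x)ᶜ})

/-- A topologized semilattice is complete if every nonempty chain `C` has an infimum and a
supremum in `X`, both belonging to the closure of `C`. -/
def CompleteTS [SemilatticeInf X] [TopologicalSpace X] : Prop :=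
  ∀ C : Set X, C.Nonempty → IsChain (· ≤ ·) C →
    (∃ a : X, IsGLB C a ∧ a ∈ closure C) ∧ (∃ b : X, IsLUB C b ∧ b ∈ closure C)

/-- The Scott topology: the topology whose open sets are the Scott-open sets. -/
def scottTop [Preorder X] : TopologicalSpace X :=
  TopologicalSpace.generateFrom {U : Set X | ScottOpen X U}

/-- A meet-semilattice is meet continuous if for every nonempty up-directed set `D` having
a supremum `s` and every `a`, the set `a ⊓ D` has supremum `a ⊓ s`. -/
def MeetContinuous [SemilatticeInf X] : Prop :=
  ∀ D : Set X, D.Nonempty → DirectedOn (· ≤ ·) D → ∀ s : X, IsLUB D s →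
    ∀ a : X, IsLUB ((fun d => a ⊓ d) '' D) (a ⊓ s)


section Closure
variable {X : Type*}

/-- Iterated closure of a set under a binary operation. -/
private def clN (f : X → X → X) (B : Set X) : ℕ → Set X
  | 0 => B
  | n+1 => clN f B n ∪ Set.image2 f (clN f B n) (clN f B n)

private def bcl (f : X → X → X) (B : Set X) : Set X := ⋃ n, clN f B n

private lemma subset_bcl (f : X → X → X) (B : Set X) : B ⊆ bcl f B :=
  subset_iUnion (clN f B) 0

private lemma clN_mono_step (f : X → X → X) (B : Set X) {m n : ℕ} (h : m ≤ n) :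
    clN f B m ⊆ clN f B n := by
  induction n with
  | zero => simp_all
  | succ n ih =>
    rcases Nat.lt_or_ge m (n+1) with h'|h'
    · exact (ih (Nat.lt_succ_iff.mp h')).trans subset_union_left
    · have : m = n+1 := le_antisymm h h'
      subst this; rfl

private lemma bcl_closed (f : X → X → X) (B : Set X) {x y : X}
    (hx : x ∈ bcl f B) (hy : y ∈ bcl f B) : f x y ∈ bcl f B := by
  obtain ⟨_, ⟨m, rfl⟩, hxm⟩ := hx
  obtain ⟨_, ⟨n, rfl⟩, hyn⟩ := hy
  exact mem_iUnion.mpr ⟨(max m n) + 1, Or.inr (mem_image2_of_mem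
    (clN_mono_step f B (le_max_left m n) hxm) (clN_mono_step f B (le_max_right m n) hyn))⟩

private lemma bcl_subset {f : X → X → X} {B D : Set X} (hB : B ⊆ D)
    (hf : ∀ x ∈ D, ∀ y ∈ D, f x y ∈ D) : bcl f B ⊆ D := by
  refine iUnion_subset fun n => ?_
  induction n with
  | zero => exact hB
  | succ n ih =>
    rintro x (hx | hx)
    · exact ih hx
    · obtain ⟨a, ha, b, hb, rfl⟩ := hx
      exact hf a (ih ha) b (ih hb)

private lemma bcl_mono {f : X → X → X} {B B' : Set X} (h : B ⊆ B') :
    bcl f B ⊆ bcl f B' := by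
  refine iUnion_subset fun n => (?_ : clN f B n ⊆ clN f B' n).trans (subset_iUnion _ n)
  induction n with
  | zero => exact h
  | succ n ih => exact union_subset_union ih (image2_subset ih ih)

private lemma mk_bcl_le (f : X → X → X) (B : Set X) :
    #(bcl f B) ≤ max #B Cardinal.aleph0 := by
  have key : ∀ n, #(clN f B n) ≤ max #B Cardinal.aleph0 := by
    intro n
    induction n with
    | zero => exact le_max_left _ _
    | succ n ih =>
      calc #(clN f B (n+1)) ≤ #(clN f B n) + #(Set.image2 f (clN f B n) (clN f B n)) :=
            Cardinal.mk_union_le _ _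
        _ ≤ #(clN f B n) + #(clN f B n) * #(clN f B n) := by
            gcongr; exact Cardinal.mk_image2_le
        _ ≤ max #B Cardinal.aleph0 + max #B Cardinal.aleph0 * max #B Cardinal.aleph0 := by
            gcongr
        _ = max #B Cardinal.aleph0 := by
            rw [Cardinal.mul_eq_self (le_max_right _ _), Cardinal.add_eq_self (le_max_right _ _)]
  have huni : bcl f B = ⋃ n : ULift.{_,0} ℕ, clN f B n.down := by
    ext x
    simp only [bcl, mem_iUnion]
    exact ⟨fun ⟨n, h⟩ => ⟨⟨n⟩, h⟩, fun ⟨n, h⟩ => ⟨n.down, h⟩⟩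
  calc #(bcl f B) ≤ #(ULift.{_,0} ℕ) * ⨆ n : ULift.{_,0} ℕ, #(clN f B n.down) := by
        rw [huni]; exact Cardinal.mk_iUnion_le _
    _ ≤ Cardinal.aleph0 * max #B Cardinal.aleph0 := by
        rw [Cardinal.mk_uLift, Cardinal.mk_nat, Cardinal.lift_aleph0]
        gcongr; exact ciSup_le' fun n => key n.down
    _ ≤ max #B Cardinal.aleph0 * max #B Cardinal.aleph0 := by gcongr; exact le_max_right _ _
    _ = max #B Cardinal.aleph0 := Cardinal.mul_eq_self (le_max_right _ _)

end Closure

section DirectedLub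
variable {X : Type*} [PartialOrder X]

private lemma countable_directed_has_lub
    (hc : ∀ C : Set X, C.Nonempty → IsChain (· ≤ ·) C → ∃ b, IsLUB C b)
    (D : Set X) (hcount : D.Countable) (hne : D.Nonempty) (hdir : DirectedOn (· ≤ ·) D) :
    ∃ b, IsLUB D b := by
  obtain ⟨d, hd⟩ := hcount.exists_eq_range hne
  have hdD : ∀ n, d n ∈ D := fun n => by rw [hd]; exact mem_range_self n
  have step : ∀ x, x ∈ D → ∀ n : ℕ, ∃ z, z ∈ D ∧ x ≤ z ∧ d n ≤ z := by
    intro x hx n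
    obtain ⟨z, hz, h1, h2⟩ := hdir x hx (d n) (hdD n)
    exact ⟨z, hz, h1, h2⟩
  let g : ℕ → {x // x ∈ D} := fun n => Nat.rec ⟨d 0, hdD 0⟩
    (fun n p => ⟨(step p.1 p.2 (n+1)).choose, (step p.1 p.2 (n+1)).choose_spec.1⟩) n
  have hgmono : ∀ n, (g n).1 ≤ (g (n+1)).1 := by
    intro n
    show (g n).1 ≤ ((step (g n).1 (g n).2 (n+1)).choose : X)
    exact (step (g n).1 (g n).2 (n+1)).choose_spec.2.1
  have hmono : Monotone fun n => (g n).1 := monotone_nat_of_le_succ hgmono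
  have hgd : ∀ n, d n ≤ (g n).1 := by
    intro n
    cases n with
    | zero => exact le_refl _
    | succ n =>
      show d (n+1) ≤ ((step (g n).1 (g n).2 (n+1)).choose : X)
      exact (step (g n).1 (g n).2 (n+1)).choose_spec.2.2
  obtain ⟨s, hs⟩ := hc (range fun n => (g n).1) ⟨(g 0).1, mem_range_self 0⟩ (by
    rintro _ ⟨m, rfl⟩ _ ⟨n, rfl⟩ _
    rcases le_total m n with h | h
    · exact Or.inl (hmono h)
    · exact Or.inr (hmono h))
  refine ⟨s, ⟨?_, ?_⟩⟩
  · intro x hx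
    rw [hd] at hx
    obtain ⟨n, rfl⟩ := hx
    exact (hgd n).trans (hs.1 (mem_range_self n))
  · intro u hu
    exact hs.2 (by rintro _ ⟨n, rfl⟩; exact hu (g n).2)

private lemma directed_has_lub
    (hc : ∀ C : Set X, C.Nonempty → IsChain (· ≤ ·) C → ∃ b, IsLUB C b)
    (D : Set X) (hne : D.Nonempty) (hdir : DirectedOn (· ≤ ·) D) : ∃ b, IsLUB D b := by
  have main : ∀ κ : Cardinal, ∀ D : Set X, #D ≤ κ → D.Nonempty → DirectedOn (· ≤ ·) D →
      ∃ b, IsLUB D b := by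
    intro κ
    refine Cardinal.lt_wf.induction (C := fun κ => ∀ D : Set X, #D ≤ κ → D.Nonempty →
      DirectedOn (· ≤ ·) D → ∃ b, IsLUB D b) κ ?_
    intro κ IH D hκ hne hdir
    classical
    by_cases hcnt : D.Countable
    · exact countable_directed_has_lub hc D hcnt hne hdir
    · set κ₀ := #D with hκ₀def
      have hκ₀ : Cardinal.aleph0 < κ₀ := by
        rw [hκ₀def]
        exact lt_of_not_ge (fun h => hcnt (Cardinal.le_aleph0_iff_set_countable.mp h))
      -- the bound function
      let f : X → X → X := fun x y =>
        if h : x ∈ D ∧ y ∈ D then (hdir x h.1 y h.2).choose else x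
      have hf : ∀ x ∈ D, ∀ y ∈ D, f x y ∈ D ∧ x ≤ f x y ∧ y ≤ f x y := by
        intro x hx y hy
        have h : x ∈ D ∧ y ∈ D := ⟨hx, hy⟩
        simp only [f, dif_pos h]
        obtain ⟨h1, h2, h3⟩ := (hdir x h.1 y h.2).choose_spec
        exact ⟨h1, h2, h3⟩
      let ι := κ₀.ord.ToType
      have hmkι : #ι = κ₀ := Cardinal.mk_ord_toType κ₀
      have : Nonempty ι := Cardinal.mk_ne_zero_iff.mp (by
        rw [hmkι]; exact (Cardinal.aleph0_pos.trans hκ₀).ne')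
      obtain ⟨e⟩ : Nonempty (ι ≃ D) := Cardinal.eq.mp hmkι
      let B : ι → Set X := fun α => (fun i => ((e i : X))) '' (Iic α)
      let Dd : ι → Set X := fun α => bcl f (B α)
      have hBD : ∀ α, B α ⊆ D := by rintro α _ ⟨i, _, rfl⟩; exact (e i).2
      have hDdD : ∀ α, Dd α ⊆ D := fun α =>
        bcl_subset (hBD α) (fun x hx y hy => (hf x hx y hy).1)
      have hDdne : ∀ α, (Dd α).Nonempty := fun α =>
        ⟨e α, subset_bcl _ _ ⟨α, mem_Iic.mpr le_rfl, rfl⟩⟩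
      have hDddir : ∀ α, DirectedOn (· ≤ ·) (Dd α) := by
        intro α x hx y hy
        obtain ⟨h1, h2, h3⟩ := hf x (hDdD α hx) y (hDdD α hy)
        exact ⟨f x y, bcl_closed f _ hx hy, h2, h3⟩
      have hcard : ∀ α, #(Dd α) < κ₀ := by
        intro α
        refine lt_of_le_of_lt (mk_bcl_le f (B α)) (max_lt ?_ hκ₀)
        refine lt_of_le_of_lt (Cardinal.mk_image_le) ?_
        have h1 : (Iic α : Set ι) ⊆ insert α (Iio α) := by
          intro x hx
          rcases eq_or_lt_of_le (mem_Iic.mp hx) with h | h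
          · exact Or.inl h
          · exact Or.inr h
        calc #(Iic α : Set ι) ≤ #(insert α (Iio α) : Set ι) := Cardinal.mk_le_mk_of_subset h1
          _ ≤ #(Iio α : Set ι) + 1 := Cardinal.mk_insert_le
          _ < κ₀ := Cardinal.add_lt_of_lt hκ₀.le (Cardinal.mk_Iio_toType_ord_lt α)
              (lt_trans Cardinal.one_lt_aleph0 hκ₀)
      have hlub : ∀ α, ∃ b, IsLUB (Dd α) b := fun α =>
        IH #(Dd α) (lt_of_lt_of_le (hcard α) hκ) (Dd α) le_rfl (hDdne α) (hDddir α)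
      choose s hs using hlub
      have hsmono : ∀ {α β : ι}, α ≤ β → s α ≤ s β := by
        intro α β h
        exact (hs α).mono (hs β) (bcl_mono (image_mono (Iic_subset_Iic.mpr h)))
      obtain ⟨t, ht⟩ := hc (range s) (range_nonempty s) (by
        rintro _ ⟨α, rfl⟩ _ ⟨β, rfl⟩ _
        rcases le_total α β with h | h
        · exact Or.inl (hsmono h)
        · exact Or.inr (hsmono h))
      refine ⟨t, ⟨?_, ?_⟩⟩
      · intro x hx
        have hxB : x ∈ B (e.symm ⟨x, hx⟩) := ⟨e.symm ⟨x, hx⟩, mem_Iic.mpr le_rfl, by simp⟩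
        exact le_trans ((hs _).1 (subset_bcl _ _ hxB)) (ht.1 (mem_range_self _))
      · intro u hu
        refine ht.2 ?_
        rintro _ ⟨α, rfl⟩
        exact (hs α).2 (fun x hx => hu (hDdD α hx))
  exact main #D D le_rfl hne hdir

end DirectedLub

section Semi
variable {X : Type*} [SemilatticeInf X]

private lemma dual_chain_lub
    (hcomp : ∀ C : Set X, C.Nonempty → IsChain (· ≤ ·) C →
      (∃ a : X, IsGLB C a) ∧ (∃ b : X, IsLUB C b)) :
    ∀ C : Set Xᵒᵈ, C.Nonempty → IsChain (· ≤ ·) C → ∃ b, IsLUB C b := by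
  intro C h1 h2
  have h2' : IsChain (α := X) (· ≤ ·) C := by
    intro a ha b hb hab
    rcases h2 ha hb hab with h | h
    · exact Or.inr h
    · exact Or.inl h
  obtain ⟨a, ha⟩ := (hcomp C h1 h2').1
  exact ⟨OrderDual.toDual a, by exact ha.dual⟩

private lemma exists_isGLB
    (hcomp : ∀ C : Set X, C.Nonempty → IsChain (· ≤ ·) C →
      (∃ a : X, IsGLB C a) ∧ (∃ b : X, IsLUB C b))
    (S : Set X) (hS : S.Nonempty) : ∃ a, IsGLB S a := by
  let T : Set X := bcl (fun x y : X => x ⊓ y) S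
  have hdir : DirectedOn (α := Xᵒᵈ) (· ≤ ·) T := by
    intro x hx y hy
    let x' : X := x
    let y' : X := y
    refine ⟨OrderDual.toDual (x' ⊓ y'), bcl_closed _ _ hx hy, ?_, ?_⟩
    · show x' ⊓ y' ≤ x'
      exact inf_le_left
    · show x' ⊓ y' ≤ y'
      exact inf_le_right
  obtain ⟨a, ha⟩ := directed_has_lub (X := Xᵒᵈ) (dual_chain_lub hcomp) T
    (hS.mono (subset_bcl _ _)) hdir
  have haT : IsGLB T (OrderDual.ofDual a) := by exact ha.dual
  have hlbs : lowerBounds T = lowerBounds S := by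
    apply Subset.antisymm
    · exact fun x hx => fun s hs => hx (subset_bcl _ _ hs)
    · intro x hx t ht
      obtain ⟨_, ⟨n, rfl⟩, htn⟩ := ht
      induction n generalizing t with
      | zero => exact hx htn
      | succ n ih =>
        rcases htn with h | h
        · exact ih h
        · obtain ⟨p, hp, q, hq, rfl⟩ := h
          exact le_inf (ih hp) (ih hq)
  exact ⟨a, by rw [IsGLB, hlbs] at haT; exact haT⟩

private lemma exists_isLUB_directed
    (hcomp : ∀ C : Set X, C.Nonempty → IsChain (· ≤ ·) C →
      (∃ a : X, IsGLB C a) ∧ (∃ b : X, IsLUB C b))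
    (D : Set X) (hne : D.Nonempty) (hdir : DirectedOn (· ≤ ·) D) : ∃ b, IsLUB D b :=
  directed_has_lub (fun C h1 h2 => (hcomp C h1 h2).2) D hne hdir

end Semi

section Scott
variable {X : Type*} [SemilatticeInf X]

private lemma scottOpen_compl_Iic (b : X) : ScottOpen X (Iic b)ᶜ := by
  constructor
  · intro x y hxy hx
    exact fun hy => hx (le_trans hxy hy)
  · intro D hne hdir a ha hamem
    by_contra hcon
    rw [not_nonempty_iff_eq_empty] at hcon
    have : ∀ d ∈ D, d ≤ b := by
      intro d hd
      by_contra hdb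
      have hmem : d ∈ D ∩ (Iic b)ᶜ := ⟨hd, hdb⟩
      rw [hcon] at hmem
      exact absurd hmem (notMem_empty d)
    exact hamem (ha.2 this)

private lemma isOpen_scottTop {U : Set X} (h : IsOpen[scottTop X] U) : ScottOpen X U := by
  have h' : TopologicalSpace.GenerateOpen {U : Set X | ScottOpen X U} U := h
  clear h
  induction h' with
  | basic V hV => exact hV
  | univ =>
    exact ⟨fun x y _ _ => trivial, fun D hne _ _ _ _ => ⟨hne.choose, hne.choose_spec, trivial⟩⟩
  | inter V W hV hW ihV ihW =>
    refine ⟨fun x y hxy hx => ⟨ihV.1 hxy hx.1, ihW.1 hxy hx.2⟩, ?_⟩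
    intro D hne hdir a ha hamem
    obtain ⟨d₁, hd₁, hd₁V⟩ := ihV.2 D hne hdir a ha hamem.1
    obtain ⟨d₂, hd₂, hd₂W⟩ := ihW.2 D hne hdir a ha hamem.2
    obtain ⟨e, he, he₁, he₂⟩ := hdir d₁ hd₁ d₂ hd₂
    exact ⟨e, he, ihV.1 he₁ hd₁V, ihW.1 he₂ hd₂W⟩
  | sUnion S hS ihS =>
    refine ⟨fun x y hxy hx => ?_, ?_⟩
    · obtain ⟨V, hV, hxV⟩ := hx
      exact ⟨V, hV, (ihS V hV).1 hxy hxV⟩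
    · intro D hne hdir a ha hamem
      obtain ⟨V, hV, haV⟩ := hamem
      obtain ⟨d, hd, hdV⟩ := (ihS V hV).2 D hne hdir a ha haV
      exact ⟨d, hd, V, hV, hdV⟩

private lemma le_nhds_generateFrom_iff {α : Type*} {g : Set (Set α)} {x : α} {F : Filter α} :
    F ≤ @nhds α (TopologicalSpace.generateFrom g) x ↔ ∀ s ∈ g, x ∈ s → s ∈ F := by
  rw [TopologicalSpace.nhds_generateFrom, le_iInf₂_iff]
  constructor
  · intro h s hs hxs
    exact Filter.le_principal_iff.mp (h s ⟨hxs, hs⟩)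
  · intro h s hs
    exact Filter.le_principal_iff.mpr (h s hs.2 hs.1)

end Scott

section Lawson
variable {X : Type*} [SemilatticeInf X]

private def limSet (F : Ultrafilter X) : Set X := {x | ∃ S ∈ F, IsGLB S x}

private lemma limSet_spec
    (hcomp : ∀ C : Set X, C.Nonempty → IsChain (· ≤ ·) C →
      (∃ a : X, IsGLB C a) ∧ (∃ b : X, IsLUB C b))
    (F : Ultrafilter X) : (limSet F).Nonempty ∧ DirectedOn (· ≤ ·) (limSet F) := by
  constructor
  · obtain ⟨a, ha⟩ := exists_isGLB hcomp univ (Filter.nonempty_of_mem (f := (F : Filter X))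
      Filter.univ_mem)
    exact ⟨a, univ, Filter.univ_mem, ha⟩
  · rintro x ⟨S, hS, hxS⟩ y ⟨T, hT, hyT⟩
    have hST : S ∩ T ∈ F := Filter.inter_mem hS hT
    obtain ⟨z, hz⟩ := exists_isGLB hcomp (S ∩ T) (Filter.nonempty_of_mem (f := (F : Filter X)) hST)
    exact ⟨z, ⟨S ∩ T, hST, hz⟩, hz.2 (fun w hw => hxS.1 hw.1), hz.2 (fun w hw => hyT.1 hw.2)⟩

private lemma ultrafilter_lawson_limit
    (hcomp : ∀ C : Set X, C.Nonempty → IsChain (· ≤ ·) C →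
      (∃ a : X, IsGLB C a) ∧ (∃ b : X, IsLUB C b))
    (F : Ultrafilter X) :
    ∃ c : X, IsLUB (limSet F) c ∧ (F : Filter X) ≤ @nhds X (lawsonTop X) c := by
  obtain ⟨hne, hdir⟩ := limSet_spec hcomp F
  obtain ⟨c, hc⟩ := exists_isLUB_directed hcomp _ hne hdir
  refine ⟨c, hc, le_nhds_generateFrom_iff.mpr ?_⟩
  rintro s (hs | ⟨y, rfl⟩) hcs
  · obtain ⟨d, hdlim, hds⟩ := hs.2 (limSet F) hne hdir c hc hcs
    obtain ⟨S, hSF, hdS⟩ := hdlim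
    exact Filter.mem_of_superset hSF (fun w hw => hs.1 (hdS.1 hw) hds)
  · have hyc : ¬ y ≤ c := hcs
    have hnot : Ici y ∉ F := fun hIci => hyc (hc.1 ⟨Ici y, hIci, isGLB_Ici⟩)
    exact Ultrafilter.compl_mem_iff_notMem.mpr hnot

private lemma lawson_compactSpace
    (hcomp : ∀ C : Set X, C.Nonempty → IsChain (· ≤ ·) C →
      (∃ a : X, IsGLB C a) ∧ (∃ b : X, IsLUB C b)) :
    @CompactSpace X (lawsonTop X) := by
  letI := lawsonTop X
  refine ⟨?_⟩
  rw [isCompact_iff_ultrafilter_le_nhds]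
  intro F _
  obtain ⟨c, _, hconv⟩ := ultrafilter_lawson_limit hcomp F
  exact ⟨c, mem_univ c, hconv⟩

private lemma lawson_limit_unique
    (hcomp : ∀ C : Set X, C.Nonempty → IsChain (· ≤ ·) C →
      (∃ a : X, IsGLB C a) ∧ (∃ b : X, IsLUB C b))
    (hT2 : @T2Space X (lawsonTop X)) (F : Ultrafilter X)
    {x : X} (hx : (F : Filter X) ≤ @nhds X (lawsonTop X) x) : IsLUB (limSet F) x := by
  obtain ⟨c, hc, hconv⟩ := ultrafilter_lawson_limit hcomp F
  rwa [(@t2_iff_ultrafilter X (lawsonTop X)).mp hT2 F hx hconv]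

private lemma lawson_inf_continuous
    (hcomp : ∀ C : Set X, C.Nonempty → IsChain (· ≤ ·) C →
      (∃ a : X, IsGLB C a) ∧ (∃ b : X, IsLUB C b))
    (hT2 : @T2Space X (lawsonTop X)) (hmc : MeetContinuous X) :
    @Continuous (X × X) X (@instTopologicalSpaceProd X X (lawsonTop X) (lawsonTop X))
      (lawsonTop X) (fun p => p.1 ⊓ p.2) := by
  letI := lawsonTop X
  rw [continuous_iff_ultrafilter]
  rintro ⟨a, b⟩ G hG
  set m : X × X → X := fun p => p.1 ⊓ p.2 with hm
  obtain ⟨c, hc, hconv⟩ := ultrafilter_lawson_limit hcomp (G.map m)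
  have hGa : ↑(G.map Prod.fst) ≤ 𝓝 a := by
    rw [Ultrafilter.coe_map]
    calc Filter.map Prod.fst ↑G ≤ Filter.map Prod.fst (𝓝 (a, b)) := Filter.map_mono hG
      _ ≤ 𝓝 a := by rw [nhds_prod_eq]; exact Filter.tendsto_fst
  have hGb : ↑(G.map Prod.snd) ≤ 𝓝 b := by
    rw [Ultrafilter.coe_map]
    calc Filter.map Prod.snd ↑G ≤ Filter.map Prod.snd (𝓝 (a, b)) := Filter.map_mono hG
      _ ≤ 𝓝 b := by rw [nhds_prod_eq]; exact Filter.tendsto_snd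
  have ha : IsLUB (limSet (G.map Prod.fst)) a := lawson_limit_unique hcomp hT2 _ hGa
  have hb : IsLUB (limSet (G.map Prod.snd)) b := lawson_limit_unique hcomp hT2 _ hGb
  suffices hcab : c = a ⊓ b by
    have hTc : Filter.Tendsto m ↑G (𝓝 c) := by
      rw [Filter.Tendsto, ← Ultrafilter.coe_map]; exact hconv
    rw [hcab] at hTc
    exact hTc
  -- auxiliary facts
  have haux : ∀ A : Set (X × X), A ∈ G → ∀ y, IsGLB (Prod.fst '' A) y →
      y ∈ limSet (G.map Prod.fst) := by
    intro A hA y hy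
    exact ⟨Prod.fst '' A, Ultrafilter.mem_map.mpr (Filter.mem_of_superset hA (subset_preimage_image _ _)), hy⟩
  have haux' : ∀ A : Set (X × X), A ∈ G → ∀ y, IsGLB (Prod.snd '' A) y →
      y ∈ limSet (G.map Prod.snd) := by
    intro A hA y hy
    exact ⟨Prod.snd '' A, Ultrafilter.mem_map.mpr (Filter.mem_of_superset hA (subset_preimage_image _ _)), hy⟩
  have hauxm : ∀ A : Set (X × X), A ∈ G → ∀ y, IsGLB (m '' A) y → y ∈ limSet (G.map m) := by
    intro A hA y hy
    exact ⟨m '' A, Ultrafilter.mem_map.mpr (Filter.mem_of_superset hA (subset_preimage_image _ _)), hy⟩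
  apply le_antisymm
  · -- c ≤ a ⊓ b
    refine (isLUB_le_iff hc).mpr ?_
    rintro y ⟨T, hT, hyT⟩
    have hA : m ⁻¹' T ∈ G := hT
    have hAne : (m ⁻¹' T).Nonempty := Filter.nonempty_of_mem (f := (G : Filter (X × X))) hA
    have le_a : y ≤ a := by
      obtain ⟨xA, hxA⟩ := exists_isGLB hcomp (Prod.fst '' (m ⁻¹' T)) (hAne.image _)
      have h1 : y ≤ xA := by
        refine hxA.2 ?_
        rintro _ ⟨p, hp, rfl⟩
        exact le_trans (hyT.1 hp) inf_le_left
      exact le_trans h1 (ha.1 (haux _ hA _ hxA))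
    have le_b : y ≤ b := by
      obtain ⟨xA, hxA⟩ := exists_isGLB hcomp (Prod.snd '' (m ⁻¹' T)) (hAne.image _)
      have h1 : y ≤ xA := by
        refine hxA.2 ?_
        rintro _ ⟨p, hp, rfl⟩
        exact le_trans (hyT.1 hp) inf_le_right
      exact le_trans h1 (hb.1 (haux' _ hA _ hxA))
    exact le_inf le_a le_b
  · -- a ⊓ b ≤ c
    set Na : Set X := {y | ∃ A ∈ G, IsGLB (Prod.fst '' A) y} with hNa
    set Nb : Set X := {y | ∃ A ∈ G, IsGLB (Prod.snd '' A) y} with hNb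
    have hNasub : Na ⊆ limSet (G.map Prod.fst) := by
      rintro y ⟨A, hA, hy⟩; exact haux A hA y hy
    have hNbsub : Nb ⊆ limSet (G.map Prod.snd) := by
      rintro y ⟨A, hA, hy⟩; exact haux' A hA y hy
    have hNalub : IsLUB Na a := by
      refine ⟨fun y hy => ha.1 (hNasub hy), fun u hu => ha.2 ?_⟩
      rintro y ⟨S, hS, hyS⟩
      obtain ⟨xA, hxA⟩ := exists_isGLB hcomp (Prod.fst '' (Prod.fst ⁻¹' S))
        ((Filter.nonempty_of_mem (f := (G : Filter (X × X))) hS).image _)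
      have h1 : y ≤ xA := hxA.2 (fun w hw => hyS.1 (image_preimage_subset _ _ hw))
      exact le_trans h1 (hu ⟨Prod.fst ⁻¹' S, hS, hxA⟩)
    have hNblub : IsLUB Nb b := by
      refine ⟨fun y hy => hb.1 (hNbsub hy), fun u hu => hb.2 ?_⟩
      rintro y ⟨S, hS, hyS⟩
      obtain ⟨xA, hxA⟩ := exists_isGLB hcomp (Prod.snd '' (Prod.snd ⁻¹' S))
        ((Filter.nonempty_of_mem (f := (G : Filter (X × X))) hS).image _)
      have h1 : y ≤ xA := hxA.2 (fun w hw => hyS.1 (image_preimage_subset _ _ hw))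
      exact le_trans h1 (hu ⟨Prod.snd ⁻¹' S, hS, hxA⟩)
    have hNane : Na.Nonempty := by
      obtain ⟨xA, hxA⟩ := exists_isGLB hcomp (Prod.fst '' (univ : Set (X × X)))
        ((Filter.nonempty_of_mem (f := (G : Filter (X × X))) Filter.univ_mem).image _)
      exact ⟨xA, univ, Filter.univ_mem, hxA⟩
    have hNbne : Nb.Nonempty := by
      obtain ⟨xA, hxA⟩ := exists_isGLB hcomp (Prod.snd '' (univ : Set (X × X)))
        ((Filter.nonempty_of_mem (f := (G : Filter (X × X))) Filter.univ_mem).image _)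
      exact ⟨xA, univ, Filter.univ_mem, hxA⟩
    have hNadir : DirectedOn (· ≤ ·) Na := by
      rintro x ⟨A, hA, hxA⟩ y ⟨B, hB, hyB⟩
      have hAB : A ∩ B ∈ G := Filter.inter_mem hA hB
      obtain ⟨z, hz⟩ := exists_isGLB hcomp (Prod.fst '' (A ∩ B))
        ((Filter.nonempty_of_mem (f := (G : Filter (X × X))) hAB).image _)
      refine ⟨z, ⟨A ∩ B, hAB, hz⟩, ?_, ?_⟩
      · exact hz.2 (by rintro _ ⟨p, hp, rfl⟩; exact hxA.1 ⟨p, hp.1, rfl⟩)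
      · exact hz.2 (by rintro _ ⟨p, hp, rfl⟩; exact hyB.1 ⟨p, hp.2, rfl⟩)
    have hNbdir : DirectedOn (· ≤ ·) Nb := by
      rintro x ⟨A, hA, hxA⟩ y ⟨B, hB, hyB⟩
      have hAB : A ∩ B ∈ G := Filter.inter_mem hA hB
      obtain ⟨z, hz⟩ := exists_isGLB hcomp (Prod.snd '' (A ∩ B))
        ((Filter.nonempty_of_mem (f := (G : Filter (X × X))) hAB).image _)
      refine ⟨z, ⟨A ∩ B, hAB, hz⟩, ?_, ?_⟩
      · exact hz.2 (by rintro _ ⟨p, hp, rfl⟩; exact hxA.1 ⟨p, hp.1, rfl⟩)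
      · exact hz.2 (by rintro _ ⟨p, hp, rfl⟩; exact hyB.1 ⟨p, hp.2, rfl⟩)
    have hmcb := hmc Nb hNbne hNbdir b hNblub a
    refine (isLUB_le_iff hmcb).mpr ?_
    rintro _ ⟨y, hyNb, rfl⟩
    show a ⊓ y ≤ c
    rw [inf_comm]
    have hmca := hmc Na hNane hNadir a hNalub y
    refine (isLUB_le_iff hmca).mpr ?_
    rintro _ ⟨x, hxNa, rfl⟩
    show y ⊓ x ≤ c
    obtain ⟨B, hB, hyB⟩ := hyNb
    obtain ⟨A, hA, hxA⟩ := hxNa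
    have hAB : A ∩ B ∈ G := Filter.inter_mem hA hB
    obtain ⟨z, hz⟩ := exists_isGLB hcomp (m '' (A ∩ B))
      ((Filter.nonempty_of_mem (f := (G : Filter (X × X))) hAB).image _)
    have h1 : y ⊓ x ≤ z := by
      refine hz.2 ?_
      rintro _ ⟨p, hp, rfl⟩
      exact le_inf (le_trans inf_le_right (hxA.1 ⟨p, hp.1, rfl⟩))
        (le_trans inf_le_left (hyB.1 ⟨p, hp.2, rfl⟩))
    exact le_trans h1 (hc.1 (hauxm _ hAB _ hz))

end Lawson

section Two
variable {X : Type*} [SemilatticeInf X]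

private lemma lawson_isClosed_Ici
    (hT2 : @T2Space X (lawsonTop X))
    (hcont : @Continuous (X × X) X (@instTopologicalSpaceProd X X (lawsonTop X) (lawsonTop X))
      (lawsonTop X) (fun p => p.1 ⊓ p.2))
    (b : X) : IsClosed[lawsonTop X] (Ici b) := by
  letI := lawsonTop X
  have h1 : Continuous fun x : X => x ⊓ b := hcont.comp (continuous_id.prodMk continuous_const)
  have h2 : Ici b = {x : X | x ⊓ b = b} := by
    ext x; simp [inf_eq_right]
  rw [h2]
  exact isClosed_eq h1 continuous_const

private lemma lawson_isClosed_Iic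
    (hT2 : @T2Space X (lawsonTop X))
    (hcont : @Continuous (X × X) X (@instTopologicalSpaceProd X X (lawsonTop X) (lawsonTop X))
      (lawsonTop X) (fun p => p.1 ⊓ p.2))
    (b : X) : IsClosed[lawsonTop X] (Iic b) := by
  letI := lawsonTop X
  have h1 : Continuous fun x : X => x ⊓ b := hcont.comp (continuous_id.prodMk continuous_const)
  have h2 : Iic b = {x : X | x ⊓ b = x} := by
    ext x; simp [inf_eq_left]
  rw [h2]
  exact isClosed_eq h1 continuous_id

private lemma tail_directed (D : Set X) (hdir : DirectedOn (· ≤ ·) D) :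
    Directed (· ≥ ·) fun d : D => Filter.principal (D ∩ Ici (d : X)) := by
  rintro ⟨d₁, hd₁⟩ ⟨d₂, hd₂⟩
  obtain ⟨e, he, he₁, he₂⟩ := hdir d₁ hd₁ d₂ hd₂
  exact ⟨⟨e, he⟩, Filter.principal_mono.mpr (fun x hx => ⟨hx.1, le_trans he₁ hx.2⟩),
    Filter.principal_mono.mpr (fun x hx => ⟨hx.1, le_trans he₂ hx.2⟩)⟩

private lemma tail_le_nhds_lub
    (hT2 : @T2Space X (lawsonTop X)) (hcompact : @CompactSpace X (lawsonTop X))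
    (hcont : @Continuous (X × X) X (@instTopologicalSpaceProd X X (lawsonTop X) (lawsonTop X))
      (lawsonTop X) (fun p => p.1 ⊓ p.2))
    (D : Set X) (hne : D.Nonempty) (hdir : DirectedOn (· ≤ ·) D) {s : X} (hs : IsLUB D s) :
    (⨅ d : D, Filter.principal (D ∩ Ici (d : X))) ≤ @nhds X (lawsonTop X) s := by
  letI := lawsonTop X
  haveI := hcompact
  haveI : Nonempty D := hne.to_subtype
  set F := ⨅ d : D, Filter.principal (D ∩ Ici (d : X)) with hF
  haveI hFne : F.NeBot := Filter.iInf_neBot_of_directed' (tail_directed D hdir)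
    (fun d => Filter.principal_neBot_iff.mpr ⟨(d : X), d.2, mem_Ici.mpr le_rfl⟩)
  have hcluster : ∀ t, ClusterPt t F → t = s := by
    intro t ht
    have hub : t ∈ upperBounds D := by
      intro d hd
      have h1 : F ≤ Filter.principal (D ∩ Ici d) := iInf_le _ (⟨d, hd⟩ : D)
      have h2 : t ∈ closure (D ∩ Ici d) := mem_closure_iff_clusterPt.mpr (ht.mono h1)
      have h3 : closure (D ∩ Ici d) ⊆ Ici d :=
        (IsClosed.closure_subset_iff (lawson_isClosed_Ici hT2 hcont d)).mpr inter_subset_right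
      exact h3 h2
    have hle : t ≤ s := by
      have h1 : F ≤ Filter.principal D :=
        le_trans (iInf_le _ (Classical.arbitrary D)) (Filter.principal_mono.mpr inter_subset_left)
      have h2 : t ∈ closure D := mem_closure_iff_clusterPt.mpr (ht.mono h1)
      have h3 : closure D ⊆ Iic s :=
        (IsClosed.closure_subset_iff (lawson_isClosed_Iic hT2 hcont s)).mpr hs.1
      exact h3 h2
    exact le_antisymm hle (hs.2 hub)
  by_contra hnot
  rw [Filter.le_def] at hnot
  push_neg at hnot
  obtain ⟨U, hU, hUF⟩ := hnot
  obtain ⟨O, hOU, hOopen, hsO⟩ := mem_nhds_iff.mp hU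
  have hOF : O ∉ F := fun h => hUF (Filter.mem_of_superset h hOU)
  haveI hGne : (F ⊓ Filter.principal Oᶜ).NeBot := by
    rw [Filter.inf_principal_neBot_iff]
    intro T hT
    by_contra hTO
    rw [not_nonempty_iff_eq_empty] at hTO
    have hTsub : T ⊆ O := by
      intro x hx
      by_contra hxO
      have : x ∈ T ∩ Oᶜ := ⟨hx, hxO⟩
      rw [hTO] at this
      exact absurd this (notMem_empty x)
    exact hOF (Filter.mem_of_superset hT hTsub)
  obtain ⟨t, ht⟩ := exists_clusterPt_of_compactSpace (F ⊓ Filter.principal Oᶜ)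
  have hts : t = s := hcluster t (ht.mono inf_le_left)
  have htO : t ∈ Oᶜ := by
    have h2 : t ∈ closure Oᶜ := mem_closure_iff_clusterPt.mpr (ht.mono inf_le_right)
    rwa [hOopen.isClosed_compl.closure_eq] at h2
  rw [hts] at htO
  exact htO hsO

private lemma scottOpen_upperClosure
    (hT2 : @T2Space X (lawsonTop X)) (hcompact : @CompactSpace X (lawsonTop X))
    (hcont : @Continuous (X × X) X (@instTopologicalSpaceProd X X (lawsonTop X) (lawsonTop X))
      (lawsonTop X) (fun p => p.1 ⊓ p.2))
    (V : Set X) (hV : IsOpen[lawsonTop X] V) :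
    ScottOpen X {x : X | ∃ v ∈ V, v ≤ x} := by
  constructor
  · rintro x y hxy ⟨v, hv, hvx⟩
    exact ⟨v, hv, hvx.trans hxy⟩
  · intro D hne hdir a ha hmem
    obtain ⟨v, hvV, hva⟩ := hmem
    letI := lawsonTop X
    have htail := tail_le_nhds_lub hT2 hcompact hcont D hne hdir ha
    have hc1 : Continuous fun x : X => v ⊓ x := hcont.comp (continuous_const.prodMk continuous_id)
    have hvav : v ⊓ a = v := inf_eq_left.mpr hva
    have hVnb : V ∈ 𝓝 (v ⊓ a) := by rw [hvav]; exact hV.mem_nhds hvV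
    have hpre : (fun x : X => v ⊓ x) ⁻¹' V ∈ 𝓝 a := (hc1.tendsto a) hVnb
    haveI : Nonempty D := hne.to_subtype
    have hmemF : (fun x : X => v ⊓ x) ⁻¹' V ∈
        ⨅ d : D, Filter.principal (D ∩ Ici (d : X)) := htail hpre
    rw [Filter.mem_iInf_of_directed (tail_directed D hdir)] at hmemF
    obtain ⟨d, hd⟩ := hmemF
    have hdmem : (d : X) ∈ D ∩ Ici (d : X) := ⟨d.2, mem_Ici.mpr le_rfl⟩
    exact ⟨(d : X), d.2, ⟨v ⊓ (d : X), hd hdmem, inf_le_right⟩⟩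

private lemma scott_compactSpace
    (hcomp : ∀ C : Set X, C.Nonempty → IsChain (· ≤ ·) C →
      (∃ a : X, IsGLB C a) ∧ (∃ b : X, IsLUB C b)) :
    @CompactSpace X (scottTop X) := by
  rcases isEmpty_or_nonempty X with hX | hX
  · exact @Finite.compactSpace X (scottTop X) _
  · letI := scottTop X
    obtain ⟨bot, hbot⟩ := exists_isGLB hcomp univ univ_nonempty
    refine ⟨isCompact_of_finite_subcover fun {ι} U hUo hcov => ?_⟩
    obtain ⟨i, hi⟩ := mem_iUnion.mp (hcov (mem_univ bot))
    refine ⟨{i}, fun x _ => ?_⟩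
    simp only [Finset.mem_singleton, iUnion_iUnion_eq_left]
    exact (isOpen_scottTop (hUo i)).1 (hbot.1 (mem_univ x)) hi

private lemma lawson_prod_nbhd
    (hcont : @Continuous (X × X) X (@instTopologicalSpaceProd X X (lawsonTop X) (lawsonTop X))
      (lawsonTop X) (fun p => p.1 ⊓ p.2))
    {U : Set X} (hUopen : IsOpen[lawsonTop X] U) {a b : X} (hab : a ⊓ b ∈ U) :
    ∃ V W : Set X, IsOpen[lawsonTop X] V ∧ IsOpen[lawsonTop X] W ∧ a ∈ V ∧ b ∈ W ∧
      V ×ˢ W ⊆ (fun p : X × X => p.1 ⊓ p.2) ⁻¹' U := by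
  letI := lawsonTop X
  have h1 : (fun p : X × X => p.1 ⊓ p.2) ⁻¹' U ∈ 𝓝 (a, b) :=
    (hcont.tendsto (a, b)) (hUopen.mem_nhds hab)
  rw [nhds_prod_eq, Filter.mem_prod_iff] at h1
  obtain ⟨V₀, hV₀, W₀, hW₀, hsub⟩ := h1
  obtain ⟨V, hVsub, hVopen, haV⟩ := mem_nhds_iff.mp hV₀
  obtain ⟨W, hWsub, hWopen, hbW⟩ := mem_nhds_iff.mp hW₀
  exact ⟨V, W, hVopen, hWopen, haV, hbW, (prod_mono hVsub hWsub).trans hsub⟩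

private lemma scott_inf_continuous
    (hT2 : @T2Space X (lawsonTop X)) (hcompact : @CompactSpace X (lawsonTop X))
    (hcont : @Continuous (X × X) X (@instTopologicalSpaceProd X X (lawsonTop X) (lawsonTop X))
      (lawsonTop X) (fun p => p.1 ⊓ p.2)) :
    @Continuous (X × X) X (@instTopologicalSpaceProd X X (scottTop X) (scottTop X))
      (scottTop X) (fun p => p.1 ⊓ p.2) := by
  letI := scottTop X
  refine continuous_generateFrom_iff.mpr ?_
  intro U hU
  rw [isOpen_prod_iff]
  intro a b hab
  obtain ⟨V, W, hVo, hWo, haV, hbW, hsub⟩ := lawson_prod_nbhd hcont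
    (TopologicalSpace.isOpen_generateFrom_of_mem (Or.inl hU)) hab
  refine ⟨{x : X | ∃ v ∈ V, v ≤ x}, {x : X | ∃ w ∈ W, w ≤ x},
    TopologicalSpace.isOpen_generateFrom_of_mem (scottOpen_upperClosure hT2 hcompact hcont V hVo),
    TopologicalSpace.isOpen_generateFrom_of_mem (scottOpen_upperClosure hT2 hcompact hcont W hWo),
    ⟨a, haV, le_rfl⟩, ⟨b, hbW, le_rfl⟩, ?_⟩
  rintro ⟨x, y⟩ ⟨⟨v, hvV, hvx⟩, ⟨w, hwW, hwy⟩⟩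
  exact hU.1 (inf_le_inf hvx hwy) (hsub (mk_mem_prod hvV hwW))

private lemma meetContinuous_of_scott
    (h3m : @Continuous (X × X) X (@instTopologicalSpaceProd X X (scottTop X) (scottTop X))
      (scottTop X) (fun p => p.1 ⊓ p.2)) :
    MeetContinuous X := by
  intro D hne hdir s hs a
  constructor
  · rintro _ ⟨d, hd, rfl⟩
    exact inf_le_inf_left a (hs.1 hd)
  · intro u hu
    by_contra hcon
    letI := scottTop X
    have hc1 : Continuous fun z : X => a ⊓ z := h3m.comp (continuous_const.prodMk continuous_id)
    have hUo : IsOpen ((fun z : X => a ⊓ z) ⁻¹' (Iic u)ᶜ) :=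
      (TopologicalSpace.isOpen_generateFrom_of_mem (scottOpen_compl_Iic u)).preimage hc1
    have hso := isOpen_scottTop hUo
    obtain ⟨d, hd, hdmem⟩ := hso.2 D hne hdir s hs (by exact hcon)
    exact hdmem (hu (mem_image_of_mem _ hd))

end Two

/-- Let `X` be a complete meet-semilattice whose Lawson topology is Hausdorff.
Then the following are equivalent: (1) `X` is meet continuous; (2) `X` with the Lawson
topology is a compact topological semilattice; (3) `X` with the Scott topology is a compact
topological semilattice. -/
theorem stmt9 {X : Type*} [SemilatticeInf X]
    (hcomp : ∀ C : Set X, C.Nonempty → IsChain (· ≤ ·) C →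
      (∃ a : X, IsGLB C a) ∧ (∃ b : X, IsLUB C b))
    (hT2 : @T2Space X (lawsonTop X)) :
    List.TFAE
      [MeetContinuous X,
       @CompactSpace X (lawsonTop X) ∧
         @Continuous (X × X) X (@instTopologicalSpaceProd X X (lawsonTop X) (lawsonTop X))
           (lawsonTop X) (fun p => p.1 ⊓ p.2),
       @CompactSpace X (scottTop X) ∧
         @Continuous (X × X) X (@instTopologicalSpaceProd X X (scottTop X) (scottTop X))
           (scottTop X) (fun p => p.1 ⊓ p.2)] := by
  tfae_have 1 → 2 := fun h1 =>
    ⟨lawson_compactSpace hcomp, lawson_inf_continuous hcomp hT2 h1⟩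
  tfae_have 2 → 3 := fun h2 =>
    ⟨scott_compactSpace hcomp, scott_inf_continuous hT2 h2.1 h2.2⟩
  tfae_have 3 → 1 := fun h3 => meetContinuous_of_scott h3.2
  tfae_finish
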